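/- Let F be an unsatisfiable hitting clause-set and let F = F₀, F₁, …, F_m be a singular DP-sequence such that F_m is nonsingular. Then m ≤ 2 · nosv(F) + nnosv(F), where nosv(F) is the number of 1-singular variables of F and nnosv(F) is the number of singular variables of F that are not 1-singular. -/

import Mathlib

/-- A clause-set: a finite set of finite sets of integers. -/
abbrev Cls := Finset (Finset ℤ)

/-- A clause: a finite set of nonzero integers, clash-free. -/
def IsClause (C : Finset ℤ) : Prop := (0 : ℤ) ∉ C ∧ ∀ x ∈ C, -x ∉ C

/-- All members are clauses. -/
def IsClauseSet (F : Cls) : Prop := ∀ C ∈ F, IsClause C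

/-- Satisfiability: some clause (partial assignment) meets every clause of `F`. -/
def Sat (F : Cls) : Prop := ∃ S : Finset ℤ, IsClause S ∧ ∀ D ∈ F, (S ∩ D).Nonempty

/-- Hitting: any two distinct clauses clash. -/
def Hitting (F : Cls) : Prop := ∀ C ∈ F, ∀ D ∈ F, C ≠ D → ∃ x ∈ C, -x ∈ D

/-- Unsatisfiable hitting clause-set. -/
def UHit (F : Cls) : Prop := IsClauseSet F ∧ Hitting F ∧ ¬ Sat F

/-- The variables of a clause-set (as absolute values of its literals). -/
def cvar (F : Cls) : Finset ℤ := F.sup (fun C => C.image (fun x => |x|))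

/-- Number of variables. -/
def nvar (F : Cls) : ℕ := (cvar F).card

/-- Deficiency: number of clauses minus number of variables. -/
def deficiency (F : Cls) : ℤ := (F.card : ℤ) - (nvar F : ℤ)

/-- Literal degree. -/
def ldeg (F : Cls) (x : ℤ) : ℕ := (F.filter (fun C => x ∈ C)).card

/-- Variable degree. -/
def vdeg (F : Cls) (v : ℤ) : ℕ := ldeg F v + ldeg F (-v)

/-- Singular variable. -/
def SingularVar (F : Cls) (v : ℤ) : Prop :=
  v ∈ cvar F ∧ min (ldeg F v) (ldeg F (-v)) = 1

/-- Nonsingular clause-set. -/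
def Nonsingular (F : Cls) : Prop := ∀ v, ¬ SingularVar F v

/-- Number of singular variables. -/
def nsv (F : Cls) : ℕ :=
  ((cvar F).filter (fun v => min (ldeg F v) (ldeg F (-v)) = 1)).card

/-- Number of 1-singular variables. -/
def nosv (F : Cls) : ℕ :=
  ((cvar F).filter (fun v => min (ldeg F v) (ldeg F (-v)) = 1 ∧ vdeg F v = 2)).card

/-- Number of singular, non-1-singular variables. -/
def nnosv (F : Cls) : ℕ :=
  ((cvar F).filter (fun v => min (ldeg F v) (ldeg F (-v)) = 1 ∧ vdeg F v ≠ 2)).card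

/-- Full subsumption pair: `{E ∪ {x}, E ∪ {-x}}`. -/
def IsFsPair (P : Cls) : Prop :=
  ∃ (E : Finset ℤ) (x : ℤ), IsClause E ∧ x ≠ 0 ∧ x ∉ E ∧ -x ∉ E ∧
    P = {insert x E, insert (-x) E}

/-- Strict fs-resolvability: an fs-pair whose resolvent is not in `F`, and whose
resolution variable occurs in the rest of `F`. -/
def StrictlyFsResolvable (F : Cls) : Prop :=
  ∃ (E : Finset ℤ) (x : ℤ), IsClause E ∧ x ≠ 0 ∧ x ∉ E ∧ -x ∉ E ∧
    insert x E ∈ F ∧ insert (-x) E ∈ F ∧ E ∉ F ∧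
    |x| ∈ cvar (F \ {insert x E, insert (-x) E})

/-- `F'` is an nfs-flip of `F`: an nfs-pair `{E ∪ {x}, E ∪ {-x,y}} ⊆ F` is replaced
by its flipped pair `{E ∪ {x,-y}, E ∪ {y}}`, which must not intersect `F`. -/
def NfsFlip (F F' : Cls) : Prop :=
  ∃ (E : Finset ℤ) (x y : ℤ), IsClause E ∧ x ≠ 0 ∧ y ≠ 0 ∧ |x| ≠ |y| ∧
    x ∉ E ∧ -x ∉ E ∧ y ∉ E ∧ -y ∉ E ∧
    insert x E ∈ F ∧ insert y (insert (-x) E) ∈ F ∧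
    insert (-y) (insert x E) ∉ F ∧ insert y E ∉ F ∧
    F' = (F \ {insert x E, insert y (insert (-x) E)}) ∪
         {insert (-y) (insert x E), insert y E}

/-- Intersection of all clauses of `F` (for nonempty `F`). -/
def bigInter (F : Cls) : Finset ℤ := (F.sup id).filter (fun x => ∀ C ∈ F, x ∈ C)

/-- Clause-factor: a nonempty `F' ⊆ F` whose residue is unsatisfiable. -/
def ClauseFactor (F F' : Cls) : Prop :=
  F'.Nonempty ∧ F' ⊆ F ∧ ¬ Sat (F'.image (fun E => E \ bigInter F'))

/-- A clause-factor is trivial if it has one clause, or is unsatisfiable and all of `F`. -/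
def TrivialFactor (F F' : Cls) : Prop := F'.card = 1 ∨ (¬ Sat F' ∧ F' = F)

/-- Clause-irreducible: every clause-factor is trivial. -/
def ClauseIrreducible (F : Cls) : Prop := ∀ F', ClauseFactor F F' → TrivialFactor F F'

/-- DP-reduction (variable elimination) on variable `v`. -/
def dp (v : ℤ) (F : Cls) : Cls :=
  ((F ×ˢ F).filter (fun p => p.1 ∩ p.2.image (fun x => -x) = {v})).image
    (fun p => (p.1 ∪ p.2) \ {v, -v}) ∪
  F.filter (fun C => v ∉ C ∧ -v ∉ C)

/-- `x` (or `-x`) occurs in a clause of `F`. -/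
def LitIn (F : Cls) (x : ℤ) : Prop := ∃ C ∈ F, x ∈ C ∨ -x ∈ C

/-- Isomorphism of clause-sets. -/
def Iso (F G : Cls) : Prop :=
  ∃ f : ℤ → ℤ, (∀ x, f (-x) = - f x) ∧
    (∀ x y, LitIn F x → LitIn F y → f x = f y → x = y) ∧
    G = F.image (fun C => C.image f)

/-- The clause-set D3. -/
def D3 : Cls := {({1,2,3} : Finset ℤ), {-1,-2,-3}, {-1,2}, {-2,3}, {-3,1}}

/-- Logical equivalence of clause-sets. -/
def LogEquiv (F G : Cls) : Prop :=
  ∀ S : Finset ℤ, IsClause S →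
    ((∀ D ∈ F, (S ∩ D).Nonempty) ↔ (∀ D ∈ G, (S ∩ D).Nonempty))

namespace SAux

lemma isClause_subset {C D : Finset ℤ} (h : IsClause D) (hCD : C ⊆ D) : IsClause C :=
  ⟨fun h0 => h.1 (hCD h0), fun x hx hnx => h.2 x (hCD hx) (hCD hnx)⟩

lemma mem_cvar {F : Cls} {u : ℤ} : u ∈ cvar F ↔ ∃ C ∈ F, ∃ y ∈ C, |y| = u := by
  simp [cvar, Finset.mem_sup, Finset.mem_image]

lemma mem_cvar_of {F : Cls} {C : Finset ℤ} {y : ℤ} (hC : C ∈ F) (hy : y ∈ C) :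
    |y| ∈ cvar F := mem_cvar.mpr ⟨C, hC, y, hy, rfl⟩

lemma cvar_pos {F : Cls} (hF : IsClauseSet F) {u : ℤ} (hu : u ∈ cvar F) : 0 < u := by
  obtain ⟨C, hC, y, hy, rfl⟩ := mem_cvar.mp hu
  have : y ≠ 0 := fun h => (hF C hC).1 (h ▸ hy)
  positivity

lemma ldeg_pos_iff {F : Cls} {w : ℤ} : 0 < ldeg F w ↔ ∃ C ∈ F, w ∈ C := by
  rw [ldeg, Finset.card_pos]
  constructor
  · rintro ⟨C, hC⟩
    rw [Finset.mem_filter] at hC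
    exact ⟨C, hC.1, hC.2⟩
  · rintro ⟨C, hC, hw⟩
    exact ⟨C, Finset.mem_filter.mpr ⟨hC, hw⟩⟩

lemma mem_cvar_iff_ldeg {F : Cls} {u : ℤ} (hu : 0 < u) :
    u ∈ cvar F ↔ 0 < ldeg F u + ldeg F (-u) := by
  constructor
  · intro h
    obtain ⟨C, hC, y, hy, hyu⟩ := mem_cvar.mp h
    rcases abs_choice y with h' | h'
    · have hyu' : y = u := h'.symm.trans hyu
      have := ldeg_pos_iff.mpr ⟨C, hC, hyu' ▸ hy⟩; omega
    · have hyu' : y = -u := by omega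
      have := ldeg_pos_iff.mpr ⟨C, hC, hyu' ▸ hy⟩; omega
  · intro h
    rcases (by omega : 0 < ldeg F u ∨ 0 < ldeg F (-u)) with h2 | h2
    · obtain ⟨C, hC, hm⟩ := ldeg_pos_iff.mp h2
      have := mem_cvar_of hC hm
      rwa [abs_of_pos hu] at this
    · obtain ⟨C, hC, hm⟩ := ldeg_pos_iff.mp h2
      have := mem_cvar_of hC hm
      rwa [abs_of_neg (by omega : -u < 0), neg_neg] at this

def Tot (V α : Finset ℤ) : Prop := IsClause α ∧ ∀ v ∈ V, v ∈ α ∨ -v ∈ α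

def Fals (α C : Finset ℤ) : Prop := ∀ z ∈ C, -z ∈ α

lemma exists_tot (V : Finset ℤ) (hV : ∀ v ∈ V, 0 < v) (S : Finset ℤ) (hS : IsClause S) :
    ∃ α, Tot V α ∧ S ⊆ α := by
  classical
  refine ⟨S ∪ V.filter (fun v => v ∉ S ∧ -v ∉ S), ⟨⟨?_, ?_⟩, ?_⟩, Finset.subset_union_left⟩
  · rw [Finset.mem_union]
    rintro (h | h)
    · exact hS.1 h
    · rw [Finset.mem_filter] at h
      exact absurd (hV 0 h.1) (by omega)
  · intro a ha hna
    rw [Finset.mem_union, Finset.mem_filter] at ha hna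
    rcases ha with ha | ⟨haV, haS, hnaS⟩ <;> rcases hna with hna | ⟨hnaV, h1, h2⟩
    · exact hS.2 a ha hna
    · exact h2 (by rw [neg_neg]; exact ha)
    · exact hnaS hna
    · have := hV a haV; have := hV (-a) hnaV; omega
  · intro v hv
    by_cases h1 : v ∈ S
    · exact Or.inl (Finset.mem_union_left _ h1)
    by_cases h2 : -v ∈ S
    · exact Or.inr (Finset.mem_union_left _ h2)
    · exact Or.inl (Finset.mem_union_right _ (Finset.mem_filter.mpr ⟨hv, h1, h2⟩))

lemma exists_fals {F : Cls} (hU : UHit F) {α : Finset ℤ} (hα : Tot (cvar F) α) :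
    ∃ C ∈ F, Fals α C := by
  by_contra h
  push_neg at h
  apply hU.2.2
  refine ⟨α, hα.1, fun D hD => ?_⟩
  rw [Finset.nonempty_iff_ne_empty]
  intro hemp
  refine h D hD (fun z hz => ?_)
  have hzα : z ∉ α := by
    intro hzα
    have : z ∈ α ∩ D := Finset.mem_inter.mpr ⟨hzα, hz⟩
    rw [hemp] at this; exact absurd this (Finset.notMem_empty z)
  have hvz := hα.2 |z| (mem_cvar_of hD hz)
  rcases abs_choice z with h' | h' <;> rw [h'] at hvz
  · rcases hvz with h'' | h''
    · exact absurd h'' hzα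
    · exact h''
  · rcases hvz with h'' | h''
    · exact h''
    · rw [neg_neg] at h''; exact absurd h'' hzα

lemma ldeg_one_unique {F : Cls} {x : ℤ} (h : ldeg F x = 1) {C D : Finset ℤ}
    (hC : C ∈ F) (hxC : x ∈ C) (hD : D ∈ F) (hxD : x ∈ D) : C = D := by
  have h1 := Finset.card_le_one.mp (le_of_eq h)
  exact h1 C (Finset.mem_filter.mpr ⟨hC, hxC⟩) D (Finset.mem_filter.mpr ⟨hD, hxD⟩)

lemma ML {F : Cls} (hU : UHit F) {B G : Finset ℤ} {w : ℤ}
    (hB : B ∈ F) (hwB : w ∈ B) (h1 : ldeg F w = 1) (hG : G ∈ F) (hwG : -w ∈ G) :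
    B.erase w ⊆ G := by
  intro y hy
  by_contra hyG
  rw [Finset.mem_erase] at hy
  obtain ⟨hyw, hyB⟩ := hy
  have hclB : IsClause B := hU.1 B hB
  have hclG : IsClause G := hU.1 G hG
  have hw0 : w ≠ 0 := fun h => hclB.1 (h ▸ hwB)
  have hy0 : y ≠ 0 := fun h => hclB.1 (h ▸ hyB)
  have hynw : y ≠ -w := fun h => hclB.2 w hwB (h ▸ hyB)
  set S₀ : Finset ℤ := insert y (G.image (fun z => -z)) with hS₀
  have hS₀cl : IsClause S₀ := by
    constructor
    · rw [hS₀, Finset.mem_insert]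
      rintro (h | h)
      · exact hy0 h.symm
      · rw [Finset.mem_image] at h
        obtain ⟨t, ht, ht0⟩ := h
        exact hclG.1 (by rw [show t = (0:ℤ) by omega] at ht; exact ht)
    · intro a ha hna
      rw [hS₀, Finset.mem_insert, Finset.mem_image] at ha hna
      rcases ha with ha | ⟨t, ht, ht2⟩
      · rcases hna with h | ⟨t, ht, ht'⟩
        · exact hy0 (by omega)
        · exact hyG (by rw [show t = y by omega] at ht; exact ht)
      · rcases hna with h | ⟨t', ht', ht''⟩
        · exact hyG (by rw [show t = y by omega] at ht; exact ht)
        · exact hclG.2 t ht (by rw [show t' = -t by omega] at ht'; exact ht')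
  obtain ⟨α, hαTot, hSα⟩ := exists_tot (cvar F) (fun v hv => cvar_pos hU.1 hv) S₀ hS₀cl
  have hFalsG : Fals α G := fun t ht =>
    hSα (Finset.mem_insert_of_mem (Finset.mem_image_of_mem _ ht))
  have hyα : y ∈ α := hSα (Finset.mem_insert_self _ _)
  have hαcl : IsClause α := hαTot.1
  set α' : Finset ℤ := insert (-w) (α.erase w) with hα'
  have hα'cl : IsClause α' := by
    constructor
    · rw [hα', Finset.mem_insert]
      rintro (h | h)
      · exact hw0 (by omega)
      · exact hαcl.1 (Finset.mem_of_mem_erase h)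
    · intro a ha hna
      rw [hα', Finset.mem_insert] at ha hna
      rcases ha with rfl | ha
      · rcases hna with h | h
        · exact hw0 (by omega)
        · rw [neg_neg, Finset.mem_erase] at h
          exact h.1 rfl
      · rcases hna with h | h
        · exact (Finset.mem_erase.mp ha).1 (by omega)
        · exact hαcl.2 a (Finset.mem_of_mem_erase ha) (Finset.mem_of_mem_erase h)
  have hα'Tot : Tot (cvar F) α' := by
    refine ⟨hα'cl, fun v hv => ?_⟩
    rcases hαTot.2 v hv with h | h
    · by_cases hvw : v = w
      · exact Or.inr (by rw [hα', hvw]; exact Finset.mem_insert_self _ _)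
      · exact Or.inl (by rw [hα']; exact Finset.mem_insert_of_mem (Finset.mem_erase.mpr ⟨hvw, h⟩))
    · by_cases hvw : -v = w
      · exact Or.inl (by rw [hα', show v = -w by omega]; exact Finset.mem_insert_self _ _)
      · exact Or.inr (by rw [hα']; exact Finset.mem_insert_of_mem (Finset.mem_erase.mpr ⟨hvw, h⟩))
  obtain ⟨H, hH, hFalsH⟩ := exists_fals hU hα'Tot
  by_cases hwH : w ∈ H
  · have hHB : H = B := ldeg_one_unique h1 hH hwH hB hwB
    have h2 : -y ∈ α' := hFalsH y (hHB ▸ hyB)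
    have h3 : -y ∈ α := by
      rw [hα', Finset.mem_insert] at h2
      rcases h2 with h | h
      · exact absurd (by omega : y = w) hyw
      · exact Finset.mem_of_mem_erase h
    exact hαcl.2 y hyα h3
  · by_cases hnwH : -w ∈ H
    · have h2 : w ∈ α' := by have := hFalsH (-w) hnwH; rwa [neg_neg] at this
      rw [hα', Finset.mem_insert] at h2
      rcases h2 with h | h
      · exact hw0 (by omega)
      · exact (Finset.mem_erase.mp h).1 rfl
    · have hFalsαH : Fals α H := by
        intro z hz
        have := hFalsH z hz
        rw [hα', Finset.mem_insert] at this
        rcases this with h | h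
        · exact absurd (by rw [show z = w by omega] at hz; exact hz) hwH
        · exact Finset.mem_of_mem_erase h
      have hHG : H ≠ G := fun h => hnwH (h ▸ hwG)
      obtain ⟨z, hzH, hzG⟩ := hU.2.1 H hH G hG hHG
      exact hαcl.2 z (by have := hFalsG (-z) hzG; rwa [neg_neg] at this) (hFalsαH z hzH)

lemma L1 {F : Cls} (hU : UHit F) {A : Finset ℤ} {w w' : ℤ} (hA : A ∈ F)
    (hw : w ∈ A) (hw' : w' ∈ A) (hne : w ≠ w') (h1 : ldeg F w = 1) (h1' : ldeg F w' = 1) :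
    False := by
  have hclA := hU.1 A hA
  have hw0 : w ≠ 0 := fun h => hclA.1 (h ▸ hw)
  have hS₀cl : IsClause (A.image (fun z => -z)) := by
    constructor
    · rw [Finset.mem_image]
      rintro ⟨t, ht, ht0⟩
      exact hclA.1 (by rw [show t = (0:ℤ) by omega] at ht; exact ht)
    · intro a ha hna
      rw [Finset.mem_image] at ha hna
      obtain ⟨t, ht, rfl⟩ := ha
      obtain ⟨t', ht', h'⟩ := hna
      exact hclA.2 t ht (by rw [show t' = -t by omega] at ht'; exact ht')
  obtain ⟨α, hαTot, hSα⟩ := exists_tot (cvar F) (fun v hv => cvar_pos hU.1 hv) _ hS₀cl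
  have hFalsA : Fals α A := fun t ht => hSα (Finset.mem_image_of_mem _ ht)
  have hαcl : IsClause α := hαTot.1
  set α' : Finset ℤ := insert w (α.erase (-w)) with hα'
  have hα'cl : IsClause α' := by
    constructor
    · rw [hα', Finset.mem_insert]
      rintro (h | h)
      · exact hw0 h.symm
      · exact hαcl.1 (Finset.mem_of_mem_erase h)
    · intro a ha hna
      rw [hα', Finset.mem_insert] at ha hna
      rcases ha with rfl | ha
      · rcases hna with h | h
        · exact hw0 (by omega)
        · exact (Finset.mem_erase.mp h).1 rfl
      · rcases hna with h | h
        · exact (Finset.mem_erase.mp ha).1 (by omega)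
        · exact hαcl.2 a (Finset.mem_of_mem_erase ha) (Finset.mem_of_mem_erase h)
  have hα'Tot : Tot (cvar F) α' := by
    refine ⟨hα'cl, fun v hv => ?_⟩
    rcases hαTot.2 v hv with h | h
    · by_cases hvw : v = -w
      · exact Or.inr (by rw [hα', show -v = w by omega]; exact Finset.mem_insert_self _ _)
      · exact Or.inl (by rw [hα']; exact Finset.mem_insert_of_mem (Finset.mem_erase.mpr ⟨hvw, h⟩))
    · by_cases hvw : -v = -w
      · exact Or.inl (by rw [hα', show v = w by omega]; exact Finset.mem_insert_self _ _)
      · exact Or.inr (by rw [hα']; exact Finset.mem_insert_of_mem (Finset.mem_erase.mpr ⟨hvw, h⟩))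
  obtain ⟨H, hH, hFalsH⟩ := exists_fals hU hα'Tot
  have hnwH : -w ∈ H := by
    by_contra hnwH
    by_cases hwH : w ∈ H
    · have hHA : H = A := ldeg_one_unique h1 hH hwH hA hw
      have h2 : -w ∈ α' := hFalsH w (hHA ▸ hw)
      rw [hα', Finset.mem_insert] at h2
      rcases h2 with h | h
      · exact hw0 (by omega)
      · exact (Finset.mem_erase.mp h).1 rfl
    · have hFalsαH : Fals α H := by
        intro z hz
        have := hFalsH z hz
        rw [hα', Finset.mem_insert] at this
        rcases this with h | h
        · exact absurd (by rw [show z = -w by omega] at hz; exact hz) hnwH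
        · exact Finset.mem_of_mem_erase h
      have hHA : H ≠ A := fun h => hwH (h ▸ hw)
      obtain ⟨z, hzH, hzA⟩ := hU.2.1 H hH A hA hHA
      exact hαcl.2 z (by have := hFalsA (-z) hzA; rwa [neg_neg] at this) (hFalsαH z hzH)
  have hsub := ML hU hA hw h1 hH hnwH
  have hw'H : w' ∈ H := hsub (Finset.mem_erase.mpr ⟨Ne.symm hne, hw'⟩)
  have hHA : H ≠ A := fun h => hclA.2 w hw (h ▸ hnwH)
  have h2 : 2 ≤ ldeg F w' := by
    rw [ldeg]
    have hsub2 : ({A, H} : Cls) ⊆ F.filter (fun C => w' ∈ C) := by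
      intro t ht
      rw [Finset.mem_insert, Finset.mem_singleton] at ht
      rcases ht with rfl | rfl
      · exact Finset.mem_filter.mpr ⟨hA, hw'⟩
      · exact Finset.mem_filter.mpr ⟨hH, hw'H⟩
    calc 2 = ({A, H} : Cls).card := (Finset.card_pair (Ne.symm hHA)).symm
    _ ≤ _ := Finset.card_le_card hsub2
  omega

lemma mem_dp {F : Cls} {v : ℤ} {R : Finset ℤ} :
    R ∈ dp v F ↔ (∃ P, P ∈ F ∧ ∃ Q, Q ∈ F ∧ P ∩ Q.image (fun x => -x) = {v} ∧
      (P ∪ Q) \ {v, -v} = R) ∨ (R ∈ F ∧ v ∉ R ∧ -v ∉ R) := by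
  simp only [dp, Finset.mem_union, Finset.mem_image, Finset.mem_filter, Finset.mem_product]
  constructor
  · rintro (⟨p, ⟨⟨h1, h2⟩, h3⟩, h4⟩ | h)
    · exact Or.inl ⟨p.1, h1, p.2, h2, h3, h4⟩
    · exact Or.inr ⟨h.1, h.2.1, h.2.2⟩
  · rintro (⟨P, h1, Q, h2, h3, h4⟩ | h)
    · exact Or.inl ⟨(P, Q), ⟨⟨h1, h2⟩, h3⟩, h4⟩
    · exact Or.inr ⟨h.1, h.2.1, h.2.2⟩

lemma inter_neg_swap {P Q : Finset ℤ} {v : ℤ} (h : P ∩ Q.image (fun x => -x) = {v}) :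
    Q ∩ P.image (fun x => -x) = {-v} := by
  have hv : ∀ z : ℤ, z ∈ P ∧ -z ∈ Q ↔ z = v := by
    intro z
    rw [← Finset.mem_singleton, ← h, Finset.mem_inter, Finset.mem_image]
    constructor
    · rintro ⟨h1, h2⟩; exact ⟨h1, -z, h2, by ring⟩
    · rintro ⟨h1, t, ht, ht2⟩; exact ⟨h1, by rw [show t = -z by omega] at ht; exact ht⟩
  ext z
  simp only [Finset.mem_inter, Finset.mem_image, Finset.mem_singleton]
  constructor
  · rintro ⟨hzQ, t, ht, ht2⟩
    have := (hv t).mp ⟨ht, by rw [show -t = z by omega]; exact hzQ⟩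
    omega
  · rintro rfl
    obtain ⟨h1, h2⟩ := (hv v).mpr rfl
    exact ⟨h2, v, h1, rfl⟩

lemma dp_symm (F : Cls) (v : ℤ) : dp v F = dp (-v) F := by
  ext R
  rw [mem_dp, mem_dp, neg_neg]
  constructor
  · rintro (⟨P, h1, Q, h2, h3, h4⟩ | h)
    · refine Or.inl ⟨Q, h2, P, h1, inter_neg_swap h3, ?_⟩
      rw [← h4, Finset.union_comm, Finset.pair_comm]
    · exact Or.inr ⟨h.1, h.2.2, h.2.1⟩
  · rintro (⟨P, h1, Q, h2, h3, h4⟩ | h)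
    · refine Or.inl ⟨Q, h2, P, h1, ?_, ?_⟩
      · have := inter_neg_swap h3; rwa [neg_neg] at this
      · rw [← h4, Finset.union_comm, Finset.pair_comm]
    · exact Or.inr ⟨h.1, h.2.2, h.2.1⟩

def eraseLit (x : ℤ) (F : Cls) : Cls :=
  (F.filter (fun G => x ∉ G)).image (fun G => G.erase (-x))

lemma erase_union_eq {C Q : Finset ℤ} {x : ℤ} (hxC : x ∈ C) (hsub : C.erase x ⊆ Q)
    (hxQ : x ∉ Q) : (C ∪ Q) \ {x, -x} = Q.erase (-x) := by
  ext z
  simp only [Finset.mem_sdiff, Finset.mem_union, Finset.mem_insert, Finset.mem_singleton,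
    Finset.mem_erase]
  constructor
  · rintro ⟨h1 | h1, h2⟩
    · push_neg at h2
      exact ⟨h2.2, hsub (Finset.mem_erase.mpr ⟨h2.1, h1⟩)⟩
    · push_neg at h2
      exact ⟨h2.2, h1⟩
  · rintro ⟨h1, h2⟩
    exact ⟨Or.inr h2, by push_neg; exact ⟨fun h => hxQ (h ▸ h2), h1⟩⟩

lemma dp_struct {F : Cls} (hU : UHit F) {x : ℤ} {C : Finset ℤ} (hC : C ∈ F) (hxC : x ∈ C)
    (hx1 : ldeg F x = 1) : dp x F = eraseLit x F := by
  have hML : ∀ D ∈ F, -x ∈ D → C.erase x ⊆ D := fun D hD h => ML hU hC hxC hx1 hD h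
  ext R
  rw [mem_dp, eraseLit]
  simp only [Finset.mem_image, Finset.mem_filter]
  constructor
  · rintro (⟨P, h1, Q, h2, h3, h4⟩ | ⟨h1, h2, h3⟩)
    · have hxP : x ∈ P ∧ -x ∈ Q := by
        have hx : x ∈ P ∩ Q.image (fun t => -t) := by
          rw [h3]; exact Finset.mem_singleton_self x
        rw [Finset.mem_inter, Finset.mem_image] at hx
        obtain ⟨hP, t, ht, ht2⟩ := hx
        exact ⟨hP, by rw [show t = -x by omega] at ht; exact ht⟩
      have hPC : P = C := ldeg_one_unique hx1 h1 hxP.1 hC hxC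
      have hxQ : x ∉ Q := fun h => (hU.1 Q h2).2 x h hxP.2
      refine ⟨Q, ⟨h2, hxQ⟩, ?_⟩
      rw [← h4, hPC]
      exact (erase_union_eq hxC (hML Q h2 hxP.2) hxQ).symm
    · exact ⟨R, ⟨h1, h2⟩, Finset.erase_eq_of_notMem h3⟩
  · rintro ⟨G, ⟨hG, hxG⟩, rfl⟩
    by_cases hnxG : -x ∈ G
    · refine Or.inl ⟨C, hC, G, hG, ?_, erase_union_eq hxC (hML G hG hnxG) hxG⟩
      ext z
      rw [Finset.mem_inter, Finset.mem_image, Finset.mem_singleton]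
      constructor
      · rintro ⟨hzC, t, ht, ht2⟩
        by_contra hzx
        have hzG : -z ∈ G := by rw [show t = -z by omega] at ht; exact ht
        have hzG2 : z ∈ G := hML G hG hnxG (Finset.mem_erase.mpr ⟨hzx, hzC⟩)
        exact (hU.1 G hG).2 z hzG2 hzG
      · intro hz
        subst hz
        exact ⟨hxC, -z, hnxG, by ring⟩
    · rw [Finset.erase_eq_of_notMem hnxG]
      exact Or.inr ⟨hG, hxG, hnxG⟩

lemma resolvent_not_mem {F : Cls} (hU : UHit F) {x : ℤ} {C D : Finset ℤ} (hC : C ∈ F)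
    (hxC : x ∈ C) (hx1 : ldeg F x = 1) (hD : D ∈ F) (hxD : -x ∈ D) :
    D.erase (-x) ∉ F := by
  intro hE
  have hxE : x ∉ D.erase (-x) := fun h =>
    (hU.1 D hD).2 (-x) hxD (by rw [neg_neg]; exact Finset.mem_of_mem_erase h)
  have hEC : D.erase (-x) ≠ C := fun h => hxE (h ▸ hxC)
  obtain ⟨z, hzE, hzC⟩ := hU.2.1 _ hE C hC hEC
  have hznx : z ≠ -x := (Finset.mem_erase.mp hzE).1
  have hzD : z ∈ D := Finset.mem_of_mem_erase hzE
  by_cases h : -z = x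
  · exact hznx (by omega)
  · have hzD2 : -z ∈ D := ML hU hC hxC hx1 hD hxD (Finset.mem_erase.mpr ⟨h, hzC⟩)
    exact (hU.1 D hD).2 z hzD hzD2

lemma eraseLit_no_x {F : Cls} {x : ℤ} {R : Finset ℤ} (hR : R ∈ eraseLit x F) :
    x ∉ R ∧ -x ∉ R := by
  rw [eraseLit, Finset.mem_image] at hR
  obtain ⟨G, hG, rfl⟩ := hR
  rw [Finset.mem_filter] at hG
  exact ⟨fun h => hG.2 (Finset.mem_of_mem_erase h), fun h => (Finset.mem_erase.mp h).1 rfl⟩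

lemma ldeg_eraseLit_x {F : Cls} (x : ℤ) :
    ldeg (eraseLit x F) x = 0 ∧ ldeg (eraseLit x F) (-x) = 0 := by
  constructor <;>
  · rw [ldeg, Finset.card_eq_zero, Finset.filter_eq_empty_iff]
    intro R hR
    have := eraseLit_no_x hR
    tauto

lemma eraseLit_injOn {F : Cls} (hU : UHit F) {x : ℤ} {C : Finset ℤ} (hC : C ∈ F) (hxC : x ∈ C)
    (hx1 : ldeg F x = 1) :
    Set.InjOn (fun G : Finset ℤ => G.erase (-x)) (F.filter (fun G => x ∉ G)) := by
  intro G₁ h₁ G₂ h₂ heq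
  simp only [Finset.coe_filter, Set.mem_setOf_eq] at h₁ h₂
  simp only at heq
  by_cases e₁ : -x ∈ G₁ <;> by_cases e₂ : -x ∈ G₂
  · rw [← Finset.insert_erase e₁, ← Finset.insert_erase e₂, heq]
  · exfalso
    apply resolvent_not_mem hU hC hxC hx1 h₁.1 e₁
    rw [heq, Finset.erase_eq_of_notMem e₂]; exact h₂.1
  · exfalso
    apply resolvent_not_mem hU hC hxC hx1 h₂.1 e₂
    rw [← heq, Finset.erase_eq_of_notMem e₁]; exact h₁.1
  · rwa [Finset.erase_eq_of_notMem e₁, Finset.erase_eq_of_notMem e₂] at heq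

lemma ldeg_eraseLit {F : Cls} (hU : UHit F) {x : ℤ} {C : Finset ℤ} (hC : C ∈ F) (hxC : x ∈ C)
    (hx1 : ldeg F x = 1) {w : ℤ} (hw2 : w ≠ -x) :
    ldeg (eraseLit x F) w + (if w ∈ C then 1 else 0) = ldeg F w := by
  classical
  have h1 : ldeg (eraseLit x F) w = ((F.filter (fun G => x ∉ G)).filter (fun G => w ∈ G)).card := by
    rw [ldeg, eraseLit, Finset.filter_image]
    rw [Finset.card_image_of_injOn
      ((eraseLit_injOn hU hC hxC hx1).mono (by exact_mod_cast Finset.filter_subset _ _))]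
    congr 1
    apply Finset.filter_congr
    intro G _
    simp only [Finset.mem_erase]
    constructor
    · rintro ⟨_, h⟩; exact h
    · intro h; exact ⟨hw2, h⟩
  have h2 : (F.filter (fun G => w ∈ G)).card
      = ((F.filter (fun G => w ∈ G)).filter (fun G => x ∈ G)).card
        + ((F.filter (fun G => w ∈ G)).filter (fun G => ¬ x ∈ G)).card :=
    (Finset.card_filter_add_card_filter_not _).symm
  have h3 : (F.filter (fun G => w ∈ G)).filter (fun G => x ∈ G)
      = if w ∈ C then {C} else ∅ := by
    split_ifs with hwC
    · ext G
      simp only [Finset.mem_filter, Finset.mem_singleton]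
      constructor
      · rintro ⟨⟨hGF, _⟩, hxG⟩
        exact ldeg_one_unique hx1 hGF hxG hC hxC
      · rintro rfl
        exact ⟨⟨hC, hwC⟩, hxC⟩
    · ext G
      simp only [Finset.mem_filter, Finset.notMem_empty, iff_false, not_and]
      rintro ⟨hGF, hwG⟩ hxG
      exact hwC (ldeg_one_unique hx1 hGF hxG hC hxC ▸ hwG)
  have h4 : (F.filter (fun G => w ∈ G)).filter (fun G => ¬ x ∈ G)
      = (F.filter (fun G => x ∉ G)).filter (fun G => w ∈ G) := by
    rw [Finset.filter_filter, Finset.filter_filter]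
    apply Finset.filter_congr
    intro G _
    tauto
  rw [h1, ldeg, h2, h3, h4]
  split_ifs with hwC <;> simp <;> omega

lemma clauseSet_eraseLit {F : Cls} (hF : IsClauseSet F) (x : ℤ) :
    IsClauseSet (eraseLit x F) := by
  intro R hR
  rw [eraseLit, Finset.mem_image] at hR
  obtain ⟨G, hG, rfl⟩ := hR
  rw [Finset.mem_filter] at hG
  exact isClause_subset (hF G hG.1) (Finset.erase_subset _ _)

lemma uhit_eraseLit {F : Cls} (hU : UHit F) {x : ℤ} {C : Finset ℤ} (hC : C ∈ F) (hxC : x ∈ C)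
    (hx1 : ldeg F x = 1) : UHit (eraseLit x F) := by
  have hx0 : x ≠ 0 := fun h => (hU.1 C hC).1 (h ▸ hxC)
  refine ⟨clauseSet_eraseLit hU.1 x, ?_, ?_⟩
  · intro R₁ hR₁ R₂ hR₂ hne
    rw [eraseLit, Finset.mem_image] at hR₁ hR₂
    obtain ⟨G₁, hG₁, rfl⟩ := hR₁
    obtain ⟨G₂, hG₂, rfl⟩ := hR₂
    rw [Finset.mem_filter] at hG₁ hG₂
    have hG : G₁ ≠ G₂ := fun h => hne (h ▸ rfl)
    obtain ⟨z, hz1, hz2⟩ := hU.2.1 G₁ hG₁.1 G₂ hG₂.1 hG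
    have hzx : z ≠ x := fun h => hG₁.2 (h ▸ hz1)
    have hznx : z ≠ -x := fun h => hG₂.2 (by rw [h, neg_neg] at hz2; exact hz2)
    exact ⟨z, Finset.mem_erase.mpr ⟨hznx, hz1⟩,
      Finset.mem_erase.mpr ⟨fun h => hzx (by omega), hz2⟩⟩
  · rintro ⟨S, hScl, hSmeets⟩
    apply hU.2.2
    set T : Finset ℤ := (S.erase x).erase (-x) with hT
    refine ⟨insert x T, ⟨?_, ?_⟩, ?_⟩
    · rw [Finset.mem_insert]
      rintro (h | h)
      · exact hx0 h.symm
      · exact hScl.1 (Finset.mem_of_mem_erase (Finset.mem_of_mem_erase h))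
    · intro a ha hna
      rw [Finset.mem_insert] at ha hna
      rcases ha with rfl | ha
      · rcases hna with h | h
        · exact hx0 (by omega)
        · exact (Finset.mem_erase.mp h).1 rfl
      · rcases hna with h | h
        · exact (Finset.mem_erase.mp ha).1 (by omega)
        · exact hScl.2 a (Finset.mem_of_mem_erase (Finset.mem_of_mem_erase ha))
            (Finset.mem_of_mem_erase (Finset.mem_of_mem_erase h))
    · intro D hD
      by_cases hDC : D = C
      · exact ⟨x, Finset.mem_inter.mpr ⟨Finset.mem_insert_self _ _, hDC ▸ hxC⟩⟩
      · have hxD : x ∉ D := fun h => hDC (ldeg_one_unique hx1 hD h hC hxC)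
        have hmem : D.erase (-x) ∈ eraseLit x F := by
          rw [eraseLit, Finset.mem_image]
          exact ⟨D, Finset.mem_filter.mpr ⟨hD, hxD⟩, rfl⟩
        obtain ⟨z, hz⟩ := hSmeets _ hmem
        rw [Finset.mem_inter, Finset.mem_erase] at hz
        obtain ⟨hzS, hznx, hzD⟩ := hz
        have hzx : z ≠ x := fun h => hxD (h ▸ hzD)
        exact ⟨z, Finset.mem_inter.mpr ⟨Finset.mem_insert_of_mem
          (Finset.mem_erase.mpr ⟨hznx, Finset.mem_erase.mpr ⟨hzx, hzS⟩⟩), hzD⟩⟩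

lemma ldeg_ge_two {F : Cls} (hU : UHit F) {x : ℤ} {C : Finset ℤ} (hC : C ∈ F) (hxC : x ∈ C)
    (hx1 : ldeg F x = 1) (hk : 0 < ldeg F (-x)) {w : ℤ} (hwC : w ∈ C) (hwx : w ≠ x) :
    2 ≤ ldeg F w := by
  obtain ⟨D, hD, hxD⟩ := ldeg_pos_iff.mp hk
  have hwD : w ∈ D := ML hU hC hxC hx1 hD hxD (Finset.mem_erase.mpr ⟨hwx, hwC⟩)
  have hCD : C ≠ D := fun h => (hU.1 C hC).2 x hxC (h ▸ hxD)
  calc 2 = ({C, D} : Cls).card := (Finset.card_pair hCD).symm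
  _ ≤ (F.filter (fun G => w ∈ G)).card := by
      apply Finset.card_le_card
      intro t ht
      rw [Finset.mem_insert, Finset.mem_singleton] at ht
      rcases ht with rfl | rfl
      · exact Finset.mem_filter.mpr ⟨hC, hwC⟩
      · exact Finset.mem_filter.mpr ⟨hD, hwD⟩
  _ = ldeg F w := rfl

lemma lit_ne_of {x u : ℤ} (hu : 0 < u) (hne : u ≠ |x|) :
    u ≠ x ∧ u ≠ -x ∧ -u ≠ x ∧ -u ≠ -x := by
  have h1 := abs_nonneg x
  rcases abs_choice x with h | h <;> rw [h] at hne h1 <;> omega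

lemma cvar_eraseLit {F : Cls} (hU : UHit F) {x : ℤ} {C : Finset ℤ} (hC : C ∈ F) (hxC : x ∈ C)
    (hx1 : ldeg F x = 1) (hk : 0 < ldeg F (-x)) :
    cvar (eraseLit x F) = (cvar F).erase |x| := by
  have hx0 : x ≠ 0 := fun h => (hU.1 C hC).1 (h ▸ hxC)
  ext u
  rw [Finset.mem_erase]
  constructor
  · intro hu
    have hu0 : 0 < u := cvar_pos (clauseSet_eraseLit hU.1 x) hu
    have hune : u ≠ |x| := by
      rintro rfl
      have h0 := mem_cvar_iff_ldeg (F := eraseLit x F) (by positivity : (0:ℤ) < |x|) |>.mp hu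
      have h1 := ldeg_eraseLit_x (F := F) x
      rcases abs_choice x with h | h <;> rw [h] at h0
      · omega
      · rw [neg_neg] at h0; omega
    obtain ⟨e1, e2, e3, e4⟩ := lit_ne_of hu0 hune
    refine ⟨hune, (mem_cvar_iff_ldeg hu0).mpr ?_⟩
    have k1 := ldeg_eraseLit hU hC hxC hx1 (w := u) e2
    have k2 := ldeg_eraseLit hU hC hxC hx1 (w := -u) e4
    have h0 := (mem_cvar_iff_ldeg hu0).mp hu
    omega
  · rintro ⟨hune, hu⟩
    have hu0 : 0 < u := cvar_pos hU.1 hu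
    obtain ⟨e1, e2, e3, e4⟩ := lit_ne_of hu0 hune
    have k1 := ldeg_eraseLit hU hC hxC hx1 (w := u) e2
    have k2 := ldeg_eraseLit hU hC hxC hx1 (w := -u) e4
    have h0 := (mem_cvar_iff_ldeg hu0).mp hu
    rw [mem_cvar_iff_ldeg hu0]
    by_cases c1 : u ∈ C
    · have := ldeg_ge_two hU hC hxC hx1 hk c1 e1
      simp only [c1, if_pos] at k1
      omega
    · by_cases c2 : -u ∈ C
      · have := ldeg_ge_two hU hC hxC hx1 hk c2 e3
        simp only [c2, if_pos] at k2
        omega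
      · simp only [c1, c2, if_neg, if_false] at k1 k2
        omega

lemma ldeg_ge {F : Cls} (hU : UHit F) {x : ℤ} {C : Finset ℤ} (hC : C ∈ F) (hxC : x ∈ C)
    (hx1 : ldeg F x = 1) {w : ℤ} (hwC : w ∈ C) (hwx : w ≠ x) :
    ldeg F (-x) + 1 ≤ ldeg F w := by
  have hsub : insert C (F.filter (fun G => -x ∈ G)) ⊆ F.filter (fun G => w ∈ G) := by
    intro t ht
    rw [Finset.mem_insert] at ht
    rcases ht with rfl | ht
    · exact Finset.mem_filter.mpr ⟨hC, hwC⟩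
    · rw [Finset.mem_filter] at ht
      exact Finset.mem_filter.mpr
        ⟨ht.1, ML hU hC hxC hx1 ht.1 ht.2 (Finset.mem_erase.mpr ⟨hwx, hwC⟩)⟩
  have hCnot : C ∉ F.filter (fun G => -x ∈ G) := by
    rw [Finset.mem_filter]
    rintro ⟨-, h⟩
    exact (hU.1 C hC).2 x hxC h
  have h1 := Finset.card_le_card hsub
  rw [Finset.card_insert_of_notMem hCnot] at h1
  exact h1

def wt (a b : ℕ) : ℕ := if min a b = 1 then (if a + b = 2 then 2 else 1) else 0

lemma wt_comm (a b : ℕ) : wt a b = wt b a := by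
  simp only [wt, Nat.min_comm, Nat.add_comm]

lemma wt_eq_pred {a a' : ℕ} (b : ℕ) (h : a' + 1 = a) (h2 : 2 ≤ a') : wt a' b = wt a b := by
  subst h; simp only [wt]; split_ifs <;> omega

lemma wt_le_pred {a a' : ℕ} (b : ℕ) (h : a' + 1 = a) : wt a' b ≤ wt a b + 1 := by
  subst h; simp only [wt]; split_ifs <;> omega

def mu (G : Cls) : ℕ := ∑ u ∈ cvar G, wt (ldeg G u) (ldeg G (-u))

lemma mu_eq (G : Cls) : mu G = 2 * nosv G + nnosv G := by
  rw [mu, nosv, nnosv, Finset.card_filter, Finset.card_filter, Finset.mul_sum,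
    ← Finset.sum_add_distrib]
  apply Finset.sum_congr rfl
  intro u _
  simp only [vdeg, wt]
  split_ifs <;> simp_all <;> omega

lemma sum_le_add_one {s : Finset ℤ} (f g : ℤ → ℕ) (P : ℤ → Prop) [DecidablePred P]
    (h1 : ∀ u ∈ s, ¬ P u → f u ≤ g u) (h2 : ∀ u ∈ s, P u → f u ≤ g u + 1)
    (h3 : ∀ u ∈ s, ∀ v ∈ s, P u → P v → u = v) :
    ∑ u ∈ s, f u ≤ (∑ u ∈ s, g u) + 1 := by
  by_cases hex : ∃ u ∈ s, P u
  · obtain ⟨u₀, hu₀, hPu₀⟩ := hex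
    rw [← Finset.add_sum_erase s f hu₀, ← Finset.add_sum_erase s g hu₀]
    have hrest : ∑ u ∈ s.erase u₀, f u ≤ ∑ u ∈ s.erase u₀, g u := by
      apply Finset.sum_le_sum
      intro u hu
      have hus : u ∈ s := Finset.mem_of_mem_erase hu
      exact h1 u hus (fun hPu => (Finset.mem_erase.mp hu).1 (h3 u hus u₀ hu₀ hPu hPu₀))
    have := h2 u₀ hu₀ hPu₀
    omega
  · push_neg at hex
    calc ∑ u ∈ s, f u ≤ ∑ u ∈ s, g u :=
          Finset.sum_le_sum (fun u hu => h1 u hu (hex u hu))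
    _ ≤ _ := Nat.le_succ _

lemma step {F : Cls} (hU : UHit F) {v : ℤ} (hv : SingularVar F v) :
    UHit (dp v F) ∧ mu (dp v F) + 1 ≤ mu F := by
  classical
  obtain ⟨hvc, hmin⟩ := hv
  have hv0 : 0 < v := cvar_pos hU.1 hvc
  obtain ⟨x, hxv, hx1, hk⟩ : ∃ x, |x| = v ∧ ldeg F x = 1 ∧ 0 < ldeg F (-x) := by
    rcases (by omega : ldeg F v = 1 ∨ ldeg F (-v) = 1) with h | h
    · exact ⟨v, abs_of_pos hv0, h, by omega⟩
    · refine ⟨-v, by rw [abs_neg, abs_of_pos hv0], h, by rw [neg_neg]; omega⟩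
  have hxcase : x = v ∨ x = -v := by
    have h1 := abs_nonneg x
    rcases abs_choice x with h | h <;> omega
  have hdp : dp v F = dp x F := by
    rcases hxcase with rfl | rfl
    · rfl
    · exact dp_symm F v
  obtain ⟨C, hC, hxC⟩ := ldeg_pos_iff.mp (by omega : 0 < ldeg F x)
  have hstruct : dp v F = eraseLit x F := by rw [hdp]; exact dp_struct hU hC hxC hx1
  have hU' : UHit (eraseLit x F) := uhit_eraseLit hU hC hxC hx1
  constructor
  · rw [hstruct]; exact hU'
  rw [hstruct]
  have hcv : cvar (eraseLit x F) = (cvar F).erase v := by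
    rw [cvar_eraseLit hU hC hxC hx1 hk, hxv]
  rw [mu, mu, hcv, ← Finset.add_sum_erase (cvar F) _ hvc]
  have hsum : ldeg F v + ldeg F (-v) = 1 + ldeg F (-x) := by
    rcases hxcase with rfl | rfl
    · omega
    · rw [neg_neg]; omega
  have hwtv : wt (ldeg F v) (ldeg F (-v)) = if ldeg F (-x) = 1 then 2 else 1 := by
    simp only [wt]
    split_ifs <;> omega
  -- facts per u
  have hfacts : ∀ u ∈ (cvar F).erase v,
      ldeg (eraseLit x F) u + (if u ∈ C then 1 else 0) = ldeg F u ∧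
      ldeg (eraseLit x F) (-u) + (if -u ∈ C then 1 else 0) = ldeg F (-u) ∧
      (u ∈ C → ldeg F (-x) + 1 ≤ ldeg F u) ∧
      (-u ∈ C → ldeg F (-x) + 1 ≤ ldeg F (-u)) ∧ ¬(u ∈ C ∧ -u ∈ C) := by
    intro u hu
    obtain ⟨hune, hucv⟩ := Finset.mem_erase.mp hu
    have hu0 : 0 < u := cvar_pos hU.1 hucv
    obtain ⟨e1, e2, e3, e4⟩ := lit_ne_of hu0 (by rw [hxv]; exact hune)
    refine ⟨ldeg_eraseLit hU hC hxC hx1 e2, ldeg_eraseLit hU hC hxC hx1 e4,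
      fun h => ldeg_ge hU hC hxC hx1 h e1, fun h => ldeg_ge hU hC hxC hx1 h e3, ?_⟩
    rintro ⟨hc1, hc2⟩
    exact (hU.1 C hC).2 u hc1 hc2
  by_cases hk1 : ldeg F (-x) = 1
  · -- 1-singular case
    rw [hwtv, if_pos hk1]
    obtain ⟨D, hD, hxD⟩ := ldeg_pos_iff.mp hk
    have hxnD : x ∉ D := fun h => (hU.1 D hD).2 x h hxD
    have hA : D.erase (-x) ∈ eraseLit x F := by
      rw [eraseLit, Finset.mem_image]
      exact ⟨D, Finset.mem_filter.mpr ⟨hD, hxnD⟩, rfl⟩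
    have hkey : ∑ u ∈ (cvar F).erase v, wt (ldeg (eraseLit x F) u) (ldeg (eraseLit x F) (-u))
        ≤ (∑ u ∈ (cvar F).erase v, wt (ldeg F u) (ldeg F (-u))) + 1 := by
      apply sum_le_add_one _ _
        (fun u => (u ∈ C ∧ ldeg F u = 2) ∨ (-u ∈ C ∧ ldeg F (-u) = 2))
      · -- not exceptional
        intro u hu hP
        obtain ⟨k1, k2, g1, g2, g3⟩ := hfacts u hu
        push_neg at hP
        by_cases c1 : u ∈ C
        · have ha := g1 c1
          have hb : -u ∉ C := fun h => g3 ⟨c1, h⟩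
          rw [if_pos c1] at k1
          rw [if_neg hb, Nat.add_zero] at k2
          rw [k2]
          exact le_of_eq (wt_eq_pred _ k1 (by have := hP.1 c1; omega))
        · by_cases c2 : -u ∈ C
          · have ha := g2 c2
            rw [if_neg c1, Nat.add_zero] at k1
            rw [if_pos c2] at k2
            rw [k1, wt_comm, wt_comm (ldeg F u)]
            exact le_of_eq (wt_eq_pred _ k2 (by have := hP.2 c2; omega))
          · rw [if_neg c1, Nat.add_zero] at k1
            rw [if_neg c2, Nat.add_zero] at k2
            rw [k1, k2]
      · -- generic +1 bound
        intro u hu _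
        obtain ⟨k1, k2, g1, g2, g3⟩ := hfacts u hu
        by_cases c1 : u ∈ C
        · have hb : -u ∉ C := fun h => g3 ⟨c1, h⟩
          rw [if_pos c1] at k1
          rw [if_neg hb, Nat.add_zero] at k2
          rw [k2]
          exact wt_le_pred _ k1
        · by_cases c2 : -u ∈ C
          · rw [if_neg c1, Nat.add_zero] at k1
            rw [if_pos c2] at k2
            rw [k1, wt_comm, wt_comm (ldeg F u)]
            exact wt_le_pred _ k2
          · rw [if_neg c1, Nat.add_zero] at k1
            rw [if_neg c2, Nat.add_zero] at k2
            rw [k1, k2]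
            omega
      · -- uniqueness of exceptional variable
        intro u1 hu1 u2 hu2 hP1 hP2
        by_contra hne
        have hext : ∀ u ∈ (cvar F).erase v,
            ((u ∈ C ∧ ldeg F u = 2) ∨ (-u ∈ C ∧ ldeg F (-u) = 2)) →
            ∃ w, w ∈ C ∧ ldeg F w = 2 ∧ |w| = u ∧ w ≠ -x := by
          intro u hu hP
          obtain ⟨hune, hucv⟩ := Finset.mem_erase.mp hu
          have hu0 : 0 < u := cvar_pos hU.1 hucv
          obtain ⟨e1, e2, e3, e4⟩ := lit_ne_of hu0 (by rw [hxv]; exact hune)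
          rcases hP with ⟨h1, h2⟩ | ⟨h1, h2⟩
          · exact ⟨u, h1, h2, abs_of_pos hu0, e2⟩
          · exact ⟨-u, h1, h2, by rw [abs_neg, abs_of_pos hu0], e4⟩
        obtain ⟨w1, hw1C, hw1d, hw1a, hw1nx⟩ := hext u1 hu1 hP1
        obtain ⟨w2, hw2C, hw2d, hw2a, hw2nx⟩ := hext u2 hu2 hP2
        have hwne : w1 ≠ w2 := by
          rintro rfl; exact hne (hw1a ▸ hw2a ▸ rfl)
        have hw1x : w1 ≠ x := fun h => by rw [h, hx1] at hw1d; omega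
        have hw2x : w2 ≠ x := fun h => by rw [h, hx1] at hw2d; omega
        have hw1A : w1 ∈ D.erase (-x) := Finset.mem_erase.mpr
          ⟨hw1nx, ML hU hC hxC hx1 hD hxD (Finset.mem_erase.mpr ⟨hw1x, hw1C⟩)⟩
        have hw2A : w2 ∈ D.erase (-x) := Finset.mem_erase.mpr
          ⟨hw2nx, ML hU hC hxC hx1 hD hxD (Finset.mem_erase.mpr ⟨hw2x, hw2C⟩)⟩
        have hd1 : ldeg (eraseLit x F) w1 = 1 := by
          have := ldeg_eraseLit hU hC hxC hx1 hw1nx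
          rw [if_pos hw1C] at this; omega
        have hd2 : ldeg (eraseLit x F) w2 = 1 := by
          have := ldeg_eraseLit hU hC hxC hx1 hw2nx
          rw [if_pos hw2C] at this; omega
        exact L1 hU' hA hw1A hw2A hwne hd1 hd2
    omega
  · -- non-1-singular case
    rw [hwtv, if_neg hk1]
    have hkey : ∑ u ∈ (cvar F).erase v, wt (ldeg (eraseLit x F) u) (ldeg (eraseLit x F) (-u))
        ≤ ∑ u ∈ (cvar F).erase v, wt (ldeg F u) (ldeg F (-u)) := by
      apply Finset.sum_le_sum
      intro u hu
      obtain ⟨k1, k2, g1, g2, g3⟩ := hfacts u hu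
      by_cases c1 : u ∈ C
      · have ha := g1 c1
        have hb : -u ∉ C := fun h => g3 ⟨c1, h⟩
        rw [if_pos c1] at k1
        rw [if_neg hb, Nat.add_zero] at k2
        rw [k2]
        exact le_of_eq (wt_eq_pred _ k1 (by omega))
      · by_cases c2 : -u ∈ C
        · have ha := g2 c2
          rw [if_neg c1, Nat.add_zero] at k1
          rw [if_pos c2] at k2
          rw [k1, wt_comm, wt_comm (ldeg F u)]
          exact le_of_eq (wt_eq_pred _ k2 (by omega))
        · rw [if_neg c1, Nat.add_zero] at k1
          rw [if_neg c2, Nat.add_zero] at k2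
          rw [k1, k2]
    omega

lemma main_ind : ∀ (m : ℕ) (F : Cls) (Fs : ℕ → Cls), UHit F → Fs 0 = F →
    (∀ i < m, ∃ v, SingularVar (Fs i) v ∧ Fs (i + 1) = dp v (Fs i)) → m ≤ mu F := by
  intro m
  induction m with
  | zero => intro F Fs _ _ _; exact Nat.zero_le _
  | succ n ih =>
    intro F Fs hU h0 hseq
    obtain ⟨v, hv, hdp⟩ := hseq 0 (Nat.succ_pos n)
    rw [h0] at hv hdp
    obtain ⟨hU1, hmu⟩ := step hU hv
    have hn : n ≤ mu (dp v F) := by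
      apply ih (dp v F) (fun i => Fs (i + 1)) hU1 hdp
      intro i hi
      exact hseq (i + 1) (by omega)
    omega

end SAux


/-- A singular DP-sequence from a UHIT ending in a nonsingular clause-set has
length at most `2 · nosv(F) + nnosv(F)`. -/
theorem stmt8 (F : Cls) (hU : UHit F) (m : ℕ) (Fs : ℕ → Cls) (h0 : Fs 0 = F)
    (hseq : ∀ i < m, ∃ v, SingularVar (Fs i) v ∧ Fs (i + 1) = dp v (Fs i))
    (hns : Nonsingular (Fs m)) :
    m ≤ 2 * nosv F + nnosv F := by
  have h := SAux.main_ind m F Fs hU h0 hseq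
  rwa [SAux.mu_eq] at h
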